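/- Let H be a complex Hilbert space, T : H → H a compact linear operator such that 1 is not an eigenvalue of T. Let (m_n) be a sequence of bounded linear operators on H with sup_n ‖m_n‖ < ∞ and m_n → Id in the strong operator topology. Then there exists N such that for all n ≥ N the operator Id − m_n T is invertible (a bijective bounded operator with bounded inverse). -/

import Mathlib

open MeasureTheory Filter

noncomputable section

section EPAux

variable {H : Type*} [NormedAddCommGroup H] [NormedSpace ℂ H]

lemma EP.bounded_below (T : H →L[ℂ] H) (hT : IsCompactOperator T)
    (hT1 : ∀ x : H, T x = x → x = 0) :
    ∃ c > (0:ℝ), ∀ x : H, c * ‖x‖ ≤ ‖((1 : H →L[ℂ] H) - T) x‖ := by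
  set A : H →L[ℂ] H := 1 - T with hA
  by_contra hcon
  push_neg at hcon
  have hseq : ∀ n : ℕ, ∃ u : H, ‖u‖ = 1 ∧ ‖A u‖ < ((n:ℝ)+1)⁻¹ := by
    intro n
    obtain ⟨x, hx⟩ := hcon ((n:ℝ)+1)⁻¹ (by positivity)
    have hx0 : x ≠ 0 := by rintro rfl; simp at hx
    have hxn : (0:ℝ) < ‖x‖ := norm_pos_iff.2 hx0
    refine ⟨‖x‖⁻¹ • x, ?_, ?_⟩
    · rw [norm_smul, norm_inv, norm_norm]; field_simp
    · rw [A.map_smul_of_tower, norm_smul, norm_inv, norm_norm]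
      calc ‖x‖⁻¹ * ‖A x‖ < ‖x‖⁻¹ * (((n:ℝ)+1)⁻¹ * ‖x‖) := by
            exact mul_lt_mul_of_pos_left hx (by positivity)
        _ = ((n:ℝ)+1)⁻¹ := by field_simp
  choose u hu1 hu2 using hseq
  have hK : IsCompact (closure (T '' Metric.closedBall 0 1)) :=
    hT.isCompact_closure_image_closedBall (𝕜₁ := ℂ) 1
  have hmem : ∀ n, T (u n) ∈ closure (T '' Metric.closedBall 0 1) := fun n =>
    subset_closure ⟨u n, by simp [Metric.mem_closedBall, hu1 n], rfl⟩
  obtain ⟨a, _, φ, hφ, hconv⟩ := hK.tendsto_subseq hmem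
  have hA0 : Tendsto (fun k => A (u (φ k))) atTop (nhds 0) := by
    refine squeeze_zero_norm (a := fun k : ℕ => ((k:ℝ)+1)⁻¹) (fun k => ?_) ?_
    · refine (hu2 (φ k)).le.trans ?_
      have hk : k ≤ φ k := hφ.le_apply
      have h1 : (k:ℝ) + 1 ≤ (φ k : ℝ) + 1 := by exact_mod_cast Nat.succ_le_succ hk
      simpa using inv_anti₀ (by positivity) h1
    · have : Tendsto (fun n : ℕ => 1 / ((n : ℝ) + 1)) atTop (nhds 0) := tendsto_one_div_add_atTop_nhds_zero_nat
      simpa [one_div] using this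
  have huconv : Tendsto (fun k => u (φ k)) atTop (nhds a) := by
    have : ∀ k, u (φ k) = A (u (φ k)) + T (u (φ k)) := by
      intro k; simp [hA, ContinuousLinearMap.sub_apply]
    have h2 := hA0.add hconv
    simp only [zero_add] at h2
    convert h2 using 2 with k
    · exact this k
  have hTa : T a = a := by
    have h1 : Tendsto (fun k => T (u (φ k))) atTop (nhds (T a)) :=
      (T.continuous.tendsto a).comp huconv
    exact tendsto_nhds_unique h1 hconv
  have ha0 : a = 0 := hT1 a hTa
  have : Tendsto (fun k => ‖u (φ k)‖) atTop (nhds ‖a‖) := huconv.norm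
  have h1 : ‖a‖ = 1 := tendsto_nhds_unique this (by simpa [hu1] using tendsto_const_nhds)
  rw [ha0] at h1; simp at h1

lemma EP.riesz_within (F G : Submodule ℂ H) (hGF : G ≤ F) (hGc : IsClosed (G : Set H))
    {x : H} (hxF : x ∈ F) (hxG : x ∉ G) :
    ∃ u : H, ‖u‖ = 1 ∧ u ∈ F ∧ ∀ v ∈ G, (1:ℝ)/2 ≤ ‖u - v‖ := by
  set F' : Submodule ℂ F := G.comap F.subtype with hF'
  have hF'c : IsClosed (F' : Set F) := by
    have : (F' : Set F) = (F.subtype) ⁻¹' (G : Set H) := rfl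
    rw [this]
    exact hGc.preimage (F.subtypeL.continuous)
  have hx' : (⟨x, hxF⟩ : F) ∉ F' := hxG
  obtain ⟨x₀, hx₀F', hx₀⟩ := riesz_lemma hF'c ⟨⟨x, hxF⟩, hx'⟩ (show (1:ℝ)/2 < 1 by norm_num)
  have hx₀0 : (x₀ : H) ≠ 0 := by
    intro h
    apply hx₀F'
    have : x₀ = 0 := Subtype.ext h
    rw [this]; exact F'.zero_mem
  have hn : (0:ℝ) < ‖(x₀ : H)‖ := norm_pos_iff.2 hx₀0
  refine ⟨‖(x₀:H)‖⁻¹ • (x₀ : H), ?_, ?_, ?_⟩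
  · rw [norm_smul, norm_inv, norm_norm]; field_simp
  · exact F.smul_of_tower_mem _ x₀.2
  · intro v hv
    have hvF : v ∈ F := hGF hv
    have hyF' : (⟨‖(x₀:H)‖ • v, F.smul_of_tower_mem _ hvF⟩ : F) ∈ F' :=
      G.smul_of_tower_mem _ hv
    have h1 := hx₀ _ hyF'
    have h2 : ‖x₀ - (⟨‖(x₀:H)‖ • v, F.smul_of_tower_mem _ hvF⟩ : F)‖
        = ‖(x₀:H) - ‖(x₀:H)‖ • v‖ := rfl
    rw [h2] at h1
    have h3 : ‖(x₀:H)‖⁻¹ • (x₀:H) - v = ‖(x₀:H)‖⁻¹ • ((x₀:H) - ‖(x₀:H)‖ • v) := by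
      rw [smul_sub, smul_smul, inv_mul_cancel₀ hn.ne', one_smul]
    rw [h3, norm_smul, norm_inv, norm_norm]
    calc (1:ℝ)/2 = ‖(x₀:H)‖⁻¹ * (1/2 * ‖x₀‖) := by field_simp; rfl
      _ ≤ ‖(x₀:H)‖⁻¹ * ‖(x₀:H) - ‖(x₀:H)‖ • v‖ := by
          exact mul_le_mul_of_nonneg_left h1 (by positivity)

lemma EP.surjective [CompleteSpace H] (T : H →L[ℂ] H) (hT : IsCompactOperator T)
    (hc : ∃ c > (0:ℝ), ∀ x : H, c * ‖x‖ ≤ ‖((1 : H →L[ℂ] H) - T) x‖) :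
    Function.Surjective ((1 : H →L[ℂ] H) - T) := by
  obtain ⟨c, hc0, hbd⟩ := hc
  set A : H →L[ℂ] H := 1 - T with hA
  have hpow : ∀ (n : ℕ) (x : H), c ^ n * ‖x‖ ≤ ‖(A ^ n) x‖ := by
    intro n
    induction n with
    | zero => intro x; simp
    | succ n ih =>
      intro x
      have h1 : (A ^ (n+1)) x = (A ^ n) (A x) := by
        rw [pow_succ, ContinuousLinearMap.mul_apply]
      rw [h1]
      have h2 : c ^ (n+1) * ‖x‖ = c ^ n * (c * ‖x‖) := by ring
      rw [h2]
      calc c ^ n * (c * ‖x‖) ≤ c ^ n * ‖A x‖ :=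
            mul_le_mul_of_nonneg_left (hbd x) (by positivity)
        _ ≤ ‖(A ^ n) (A x)‖ := ih (A x)
  have hinj : ∀ n : ℕ, Function.Injective ⇑(A ^ n) := by
    intro n x y hxy
    have h0 : (A ^ n) (x - y) = 0 := by rw [map_sub, hxy, sub_self]
    have := hpow n (x - y)
    rw [h0, norm_zero] at this
    have : ‖x - y‖ ≤ 0 := by
      by_contra h
      push_neg at h
      nlinarith [pow_pos hc0 n]
    have : x - y = 0 := by
      rw [← norm_le_zero_iff]; exact this
    exact sub_eq_zero.mp this
  have hclosed : ∀ n : ℕ, IsClosed (Set.range ⇑(A ^ n)) := by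
    intro n
    have hcn : (0:ℝ) < c ^ n := pow_pos hc0 n
    have anti : AntilipschitzWith ((c ^ n)⁻¹).toNNReal ⇑(A ^ n) := by
      refine ContinuousLinearMap.antilipschitz_of_bound _ (fun x => ?_)
      rw [Real.coe_toNNReal _ (by positivity)]
      have h := hpow n x
      rw [le_inv_mul_iff₀ hcn]
      linarith
    exact anti.isClosed_range (A ^ n).uniformContinuous
  by_contra hns
  obtain ⟨y, hy⟩ : ∃ y : H, y ∉ Set.range ⇑A := by
    by_contra h
    push_neg at h
    exact hns fun z => h z
  set R : ℕ → Submodule ℂ H := fun n => LinearMap.range ((A ^ n : H →L[ℂ] H) : H →ₗ[ℂ] H) with hR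
  have hRset : ∀ n, (R n : Set H) = Set.range ⇑(A ^ n) := fun n => rfl
  have hRclosed : ∀ n, IsClosed ((R n : Submodule ℂ H) : Set H) := by
    intro n; rw [hRset]; exact hclosed n
  have hmono : ∀ k j : ℕ, k ≤ j → R j ≤ R k := by
    intro k j hkj
    rintro _ ⟨z, rfl⟩
    refine ⟨(A ^ (j - k)) z, ?_⟩
    change (A ^ k) ((A ^ (j - k)) z) = (A ^ j) z
    rw [← ContinuousLinearMap.mul_apply, ← pow_add, Nat.add_sub_cancel' hkj]
  have hmem : ∀ n, (A ^ n) y ∈ R n := fun n => ⟨y, rfl⟩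
  have hnotin : ∀ n, (A ^ n) y ∉ R (n + 1) := by
    intro n hin
    obtain ⟨z, hz⟩ := hin
    have hz' : (A ^ n) (A z) = (A ^ n) y := by
      rw [← ContinuousLinearMap.mul_apply, ← pow_succ]; exact hz
    exact hy ⟨z, hinj n hz'⟩
  have hmaps : ∀ n, ∀ x ∈ R n, A x ∈ R (n + 1) := by
    rintro n _ ⟨z, rfl⟩
    exact ⟨z, by change (A ^ (n+1)) z = A ((A ^ n) z); rw [pow_succ', ContinuousLinearMap.mul_apply]⟩
  have hriesz : ∀ n : ℕ, ∃ u : H, ‖u‖ = 1 ∧ u ∈ R n ∧ ∀ v ∈ R (n+1), (1:ℝ)/2 ≤ ‖u - v‖ :=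
    fun n => EP.riesz_within (R n) (R (n+1)) (hmono n (n+1) (by omega)) (hRclosed (n+1))
      (hmem n) (hnotin n)
  choose u hu1 huR hufar using hriesz
  have hTeq : ∀ x : H, T x = x - A x := by
    intro x; simp [hA, ContinuousLinearMap.sub_apply]
  have hkey : ∀ k j : ℕ, k < j → (1:ℝ)/2 ≤ ‖T (u k) - T (u j)‖ := by
    intro k j hkj
    have hv : A (u k) + u j - A (u j) ∈ R (k + 1) := by
      refine Submodule.sub_mem _ (Submodule.add_mem _ ?_ ?_) ?_
      · exact hmaps k _ (huR k)
      · exact hmono (k+1) j hkj (huR j)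
      · exact hmono (k+1) (j+1) (by omega) (hmaps j _ (huR j))
    have heq : T (u k) - T (u j) = u k - (A (u k) + u j - A (u j)) := by
      rw [hTeq, hTeq]; abel
    rw [heq]
    exact hufar k _ hv
  have hK : IsCompact (closure (⇑T '' Metric.closedBall 0 1)) :=
    hT.isCompact_closure_image_closedBall (𝕜₁ := ℂ) 1
  have hmemK : ∀ n, T (u n) ∈ closure (⇑T '' Metric.closedBall 0 1) := fun n =>
    subset_closure ⟨u n, by simp [Metric.mem_closedBall, hu1 n], rfl⟩
  obtain ⟨a, _, φ, hφ, hconv⟩ := hK.tendsto_subseq hmemK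
  rw [Metric.tendsto_atTop] at hconv
  obtain ⟨N, hN⟩ := hconv (1/4) (by norm_num)
  have h1 := hN N le_rfl
  have h2 := hN (N+1) (by omega)
  have hlt : φ N < φ (N+1) := hφ (by omega)
  have := hkey (φ N) (φ (N+1)) hlt
  have hd : ‖T (u (φ N)) - T (u (φ (N+1)))‖ < 1/2 := by
    have := dist_triangle (T (u (φ N))) a (T (u (φ (N+1))))
    rw [← dist_eq_norm]
    calc dist (T (u (φ N))) (T (u (φ (N+1))))
        ≤ dist (T (u (φ N))) a + dist a (T (u (φ (N+1)))) := dist_triangle _ _ _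
      _ < 1/4 + 1/4 := by
          rw [dist_comm a]
          exact add_lt_add (h1) (h2)
      _ = 1/2 := by norm_num
  linarith

lemma EP.isUnit [CompleteSpace H] (A : H →L[ℂ] H)
    (hinj : Function.Injective ⇑A) (hsurj : Function.Surjective ⇑A) :
    IsUnit A := by
  have hker : LinearMap.ker (A : H →ₗ[ℂ] H) = ⊥ := LinearMap.ker_eq_bot_of_injective (f := (A : H →ₗ[ℂ] H)) hinj
  have hrange : LinearMap.range (A : H →ₗ[ℂ] H) = ⊤ := LinearMap.range_eq_top.2 hsurj
  let e := ContinuousLinearEquiv.ofBijective A hker hrange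
  have hco : ⇑e = ⇑A := ContinuousLinearEquiv.coeFn_ofBijective A hker hrange
  refine ⟨⟨A, e.symm.toContinuousLinearMap, ?_, ?_⟩, rfl⟩
  · ext x
    have : A (e.symm x) = e (e.symm x) := by rw [hco]
    simp [ContinuousLinearMap.mul_apply, this]
  · ext x
    have : e.symm (A x) = e.symm (e x) := by rw [hco]
    simp [ContinuousLinearMap.mul_apply, this]

lemma EP.opnorm_small (T : H →L[ℂ] H) (hT : IsCompactOperator T)
    (m : ℕ → H →L[ℂ] H) (C : ℝ) (hC : ∀ n, ‖m n‖ ≤ C)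
    (hconv : ∀ x : H, Tendsto (fun n => m n x) atTop (nhds x))
    {ε : ℝ} (hε : 0 < ε) :
    ∃ N : ℕ, ∀ n ≥ N, ‖(m n).comp T - T‖ ≤ ε := by
  have hC0 : (0:ℝ) ≤ C := (norm_nonneg (m 0)).trans (hC 0)
  set δ : ℝ := ε / (2 * (C + 2)) with hδdef
  have hδ : 0 < δ := by positivity
  set K := closure (⇑T '' Metric.closedBall 0 1) with hKdef
  have hK : IsCompact K := hT.isCompact_closure_image_closedBall (𝕜₁ := ℂ) 1
  have hcover : K ⊆ ⋃ y : H, Metric.ball y δ := fun z _ =>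
    Set.mem_iUnion.2 ⟨z, Metric.mem_ball_self hδ⟩
  obtain ⟨t, ht⟩ := hK.elim_finite_subcover (fun y : H => Metric.ball y δ)
    (fun y => Metric.isOpen_ball) hcover
  have hev : ∀ᶠ n in atTop, ∀ y ∈ t, ‖m n y - y‖ < δ := by
    rw [eventually_all_finset]
    intro y _
    have := (hconv y).eventually (Metric.ball_mem_nhds y hδ)
    filter_upwards [this] with n hn
    rwa [dist_eq_norm] at hn
  obtain ⟨N, hN⟩ := eventually_atTop.mp hev
  refine ⟨N, fun n hn => ?_⟩
  have hKbound : ∀ z ∈ K, ‖m n z - z‖ ≤ ε / 2 := by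
    intro z hz
    obtain ⟨y, hyt, hzy⟩ := Set.mem_iUnion₂.1 (ht hz)
    rw [Metric.mem_ball, dist_eq_norm] at hzy
    have heq : m n z - z = m n (z - y) + (m n y - y) + (y - z) := by
      rw [map_sub]; abel
    rw [heq]
    calc ‖m n (z - y) + (m n y - y) + (y - z)‖
        ≤ ‖m n (z - y)‖ + ‖m n y - y‖ + ‖y - z‖ := norm_add₃_le
      _ ≤ C * δ + δ + δ := by
          gcongr
          · calc ‖m n (z - y)‖ ≤ ‖m n‖ * ‖z - y‖ := (m n).le_opNorm _
              _ ≤ C * δ := by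
                  apply mul_le_mul (hC n) hzy.le (norm_nonneg _) hC0
          · exact (hN n hn y hyt).le
          · rw [norm_sub_rev]; exact hzy.le
      _ = (C + 2) * δ := by ring
      _ = ε / 2 := by rw [hδdef]; field_simp
  refine ContinuousLinearMap.opNorm_le_bound _ hε.le (fun x => ?_)
  rcases eq_or_ne x 0 with rfl | hx0
  · simp
  · have hxn : (0:ℝ) < ‖x‖ := norm_pos_iff.2 hx0
    set w : H := ‖x‖⁻¹ • x with hw
    have hwn : ‖w‖ = 1 := by rw [hw, norm_smul, norm_inv, norm_norm]; field_simp
    have hTwK : T w ∈ K := subset_closure ⟨w, by simp [Metric.mem_closedBall, hwn], rfl⟩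
    have hxw : x = ‖x‖ • w := by rw [hw, smul_smul, mul_inv_cancel₀ hxn.ne', one_smul]
    have heq : ((m n).comp T - T) x = ‖x‖ • (m n (T w) - T w) := by
      conv_lhs => rw [hxw]
      simp only [ContinuousLinearMap.sub_apply, ContinuousLinearMap.comp_apply,
        ContinuousLinearMap.map_smul_of_tower, smul_sub]
    rw [heq, norm_smul, Real.norm_eq_abs, abs_of_pos hxn]
    calc ‖x‖ * ‖m n (T w) - T w‖ ≤ ‖x‖ * (ε / 2) := by
          exact mul_le_mul_of_nonneg_left (hKbound _ hTwK) hxn.le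
      _ ≤ ε * ‖x‖ := by nlinarith

end EPAux

/-- Abstract invertibility lemma (Ellis–Pinsky): if `T` is compact, `1` is not an
eigenvalue of `T`, and `m_n → Id` strongly with uniformly bounded norms, then
`Id - m_n T` is invertible for all large `n`. -/
theorem invertibility_of_id_sub_strong_limit_comp_compact
    {H : Type*} [NormedAddCommGroup H] [InnerProductSpace ℂ H] [CompleteSpace H]
    (T : H →L[ℂ] H) (hT : IsCompactOperator T)
    (hT1 : ∀ x : H, T x = x → x = 0)
    (m : ℕ → H →L[ℂ] H) (C : ℝ) (hC : ∀ n, ‖m n‖ ≤ C)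
    (hconv : ∀ x : H, Tendsto (fun n => m n x) atTop (nhds x)) :
    ∃ N : ℕ, ∀ n ≥ N, IsUnit ((1 : H →L[ℂ] H) - (m n).comp T) := by
  set A : H →L[ℂ] H := 1 - T with hA
  have hbb := EP.bounded_below T hT hT1
  obtain ⟨c, hc0, hbd⟩ := hbb
  have hinjA : Function.Injective ⇑A := by
    intro x y hxy
    have h0 : A (x - y) = 0 := by rw [map_sub, hxy, sub_self]
    have h1 := hbd (x - y)
    rw [← hA, h0, norm_zero] at h1
    have : ‖x - y‖ ≤ 0 := by nlinarith
    have : x - y = 0 := by rw [← norm_le_zero_iff]; exact this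
    exact sub_eq_zero.mp this
  have hsurjA : Function.Surjective ⇑A := EP.surjective T hT ⟨c, hc0, hbd⟩
  have hu : IsUnit A := EP.isUnit A hinjA hsurjA
  set u := hu.unit with hudef
  have huval : (u : H →L[ℂ] H) = A := hu.unit_spec
  set r : ℝ := ‖((u⁻¹ : (H →L[ℂ] H)ˣ) : H →L[ℂ] H)‖ with hrdef
  have hr0 : 0 ≤ r := norm_nonneg _
  have hε : (0:ℝ) < (r + 1)⁻¹ := by positivity
  obtain ⟨N, hN⟩ := EP.opnorm_small T hT m C hC hconv hε
  refine ⟨N, fun n hn => ?_⟩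
  set D : H →L[ℂ] H := (m n).comp T - T with hD
  have hDn : ‖D‖ ≤ (r + 1)⁻¹ := hN n hn
  have hsmall : ‖D * ((u⁻¹ : (H →L[ℂ] H)ˣ) : H →L[ℂ] H)‖ < 1 := by
    calc ‖D * ((u⁻¹ : (H →L[ℂ] H)ˣ) : H →L[ℂ] H)‖ ≤ ‖D‖ * r := norm_mul_le _ _
      _ ≤ (r + 1)⁻¹ * r := mul_le_mul_of_nonneg_right hDn hr0
      _ < 1 := by
          rw [inv_mul_lt_iff₀ (by positivity)]
          linarith
  have hunit1 : IsUnit ((1 : H →L[ℂ] H) - D * ((u⁻¹ : (H →L[ℂ] H)ˣ) : H →L[ℂ] H)) :=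
    (Units.oneSub _ hsmall).isUnit
  have hfact : ((1 : H →L[ℂ] H) - D * ((u⁻¹ : (H →L[ℂ] H)ˣ) : H →L[ℂ] H)) * (u : H →L[ℂ] H)
      = (1 : H →L[ℂ] H) - (m n).comp T := by
    have h1 : (D * ((u⁻¹ : (H →L[ℂ] H)ˣ) : H →L[ℂ] H)) * (u : H →L[ℂ] H) = D := by
      rw [mul_assoc, Units.inv_mul, mul_one]
    rw [sub_mul, one_mul, h1, huval, hD, hA]
    abel
  rw [← hfact]
  exact hunit1.mul u.isUnit
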